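/- Let H be a group with at least two distinct non-trivial elements and let N be a non-trivial normal subgroup of H * ⟨x⟩ that is the kernel of a homomorphism to a group which is injective on H (so N intersects H and ⟨x⟩-conjugates appropriately). Suppose N contains a non-trivial cyclically reduced element of odd degree d. Then for every sufficiently large integer n (explicitly, every n ≥ 3d), N contains a non-trivial element of degree n. -/

import Mathlib

open Monoid
open scoped Monoid.Coprod

/-- The generator `x` of the infinite cyclic group `⟨x⟩ = Multiplicative ℤ`. -/
def xgen : Multiplicative ℤ := Multiplicative.ofAdd 1

/-- An alternating expression `h₀ · x^{β₁} c₁ · x^{β₂} c₂ ⋯ x^{β_m} c_m` in `H ∗ ⟨x⟩`,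
recorded by the head coefficient `h₀` and the list `l = [(β₁,c₁),…,(β_m,c_m)]`. -/
def coprodExpr {H : Type*} [Group H] (h₀ : H) (l : List (ℤ × H)) : H ∗ Multiplicative ℤ :=
  Coprod.inl h₀ * (l.map fun p => Coprod.inr (xgen ^ p.1) * Coprod.inl p.2).prod

/-- The degree of an equation `w ∈ H ∗ ⟨x⟩`: the number of occurrences of `x` and `x⁻¹`
in the cyclic reduction of `w`.  Equivalently (and this is how we formalize it), it is the
minimum, over all elements conjugate to `w` and over all ways of writing such a conjugate as
an alternating expression `h₀ x^{β₁} c₁ ⋯ x^{β_m} c_m`, of the total number `∑ᵢ |βᵢ|` of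
occurrences of `x^{±1}`; this minimum is achieved exactly by the cyclic reduction of `w`. -/
noncomputable def degree {H : Type*} [Group H] (w : H ∗ Multiplicative ℤ) : ℕ :=
  sInf { n | ∃ (c : H ∗ Multiplicative ℤ) (h₀ : H) (l : List (ℤ × H)),
      c * w * c⁻¹ = coprodExpr h₀ l ∧ (l.map fun p => p.1.natAbs).sum = n }

set_option linter.unusedSectionVars false

namespace Stmt18

open Monoid.CoprodI Multiplicative

universe u

/-- Indexing family for viewing `H ∗ ⟨x⟩` as an indexed free product over `Bool`. -/
abbrev GF (H : Type u) : Bool → Type u := fun b =>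
  match b with
  | true => ULift (Multiplicative ℤ)
  | false => H

variable {H : Type u} [Group H]

instance : ∀ b, Group (GF H b)
  | true => inferInstanceAs (Group (ULift (Multiplicative ℤ)))
  | false => inferInstanceAs (Group H)

noncomputable instance (b : Bool) : DecidableEq (GF H b) := Classical.decEq _

/-- The forward hom from the binary coproduct to the indexed one. -/
noncomputable def toI : (H ∗ Multiplicative ℤ) →* CoprodI (GF H) :=
  Coprod.lift (CoprodI.of (M := GF H) (i := false))
    ((CoprodI.of (M := GF H) (i := true)).comp (MulEquiv.ulift.symm.toMonoidHom))

noncomputable def fromI : CoprodI (GF H) →* H ∗ Multiplicative ℤ :=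
  CoprodI.lift fun b =>
    match b with
    | true => (Coprod.inr (M := H)).comp MulEquiv.ulift.toMonoidHom
    | false => Coprod.inl

/-- `H ∗ ⟨x⟩` is isomorphic to the indexed free product of `H` and `⟨x⟩` over `Bool`. -/
noncomputable def eH : (H ∗ Multiplicative ℤ) ≃* CoprodI (GF H) :=
  MonoidHom.toMulEquiv toI fromI
    (by apply Coprod.hom_ext <;> ext x <;> simp [toI, fromI])
    (by
      apply CoprodI.ext_hom
      intro i
      ext x
      cases i <;> simp [toI, fromI])

@[simp] theorem eH_inl (h : H) : eH (Coprod.inl h) = CoprodI.of (M := GF H) (i := false) h := by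
  simp [eH, toI, MonoidHom.toMulEquiv]

@[simp] theorem eH_inr (z : Multiplicative ℤ) :
    eH (Coprod.inr (M := H) z) = CoprodI.of (M := GF H) (i := true) (ULift.up z) := by
  simp [eH, toI, MonoidHom.toMulEquiv]
  rfl

/-! ### Length of a letter and of a word -/

def cLen : (Σ b, GF H b) → ℕ
  | ⟨true, z⟩ => (Multiplicative.toAdd z.down).natAbs
  | ⟨false, _⟩ => 0

@[simp] theorem cLen_one (b : Bool) : cLen (⟨b, 1⟩ : Σ b, GF H b) = 0 := by
  cases b <;> simp [cLen]

theorem cLen_mul_le {b : Bool} (m m' : GF H b) :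
    cLen (⟨b, m * m'⟩ : Σ b, GF H b) ≤ cLen ⟨b, m⟩ + cLen ⟨b, m'⟩ := by
  cases b
  · simp [cLen]
  · simpa [cLen] using Int.natAbs_add_le _ _

def wLen (W : Word (GF H)) : ℕ := (W.toList.map cLen).sum

noncomputable def ell (u : CoprodI (GF H)) : ℕ := wLen (Word.equiv u)

theorem equiv_eq_smul (u : CoprodI (GF H)) : Word.equiv u = u • Word.empty := rfl

@[simp] theorem ell_one : ell (1 : CoprodI (GF H)) = 0 := by
  rw [ell, equiv_eq_smul, one_smul]
  rfl

theorem wLen_rcons {i : Bool} (p : Word.Pair (GF H) i) :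
    wLen (Word.rcons p) = cLen ⟨i, p.head⟩ + wLen p.tail := by
  rw [Word.rcons]
  split_ifs with h
  · simp [h]
  · simp [wLen, Word.cons]

theorem ell_of_mul_le {i : Bool} (m : GF H i) (u : CoprodI (GF H)) :
    ell (CoprodI.of m * u) ≤ cLen ⟨i, m⟩ + ell u := by
  have h1 : Word.equiv (CoprodI.of m * u) = CoprodI.of m • Word.equiv u := by
    rw [equiv_eq_smul, equiv_eq_smul, mul_smul]
  rw [ell, h1, Word.of_smul_def, wLen_rcons]
  have h2 : ell u = cLen ⟨i, (Word.equivPair i (Word.equiv u)).head⟩ +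
      wLen (Word.equivPair i (Word.equiv u)).tail := by
    conv_lhs => rw [ell, ← (Word.equivPair i).symm_apply_apply (Word.equiv u)]
    rw [Word.equivPair_symm, wLen_rcons]
  rw [h2, ← add_assoc]
  exact Nat.add_le_add_right (cLen_mul_le _ _) _

theorem ell_of_le {i : Bool} (m : GF H i) : ell (CoprodI.of m) ≤ cLen ⟨i, m⟩ := by
  simpa using ell_of_mul_le m 1

theorem ell_prodList_mul_le :
    ∀ (L : List (Σ b, GF H b)) (u : CoprodI (GF H)),
      ell ((L.map fun a => CoprodI.of a.2).prod * u) ≤ (L.map cLen).sum + ell u := by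
  intro L
  induction L with
  | nil => simp
  | cons a L ih =>
    intro u
    obtain ⟨i, m⟩ := a
    simp only [List.map_cons, List.prod_cons, List.sum_cons, mul_assoc]
    calc ell (CoprodI.of m * ((L.map fun a => CoprodI.of a.2).prod * u))
        ≤ cLen ⟨i, m⟩ + ell ((L.map fun a => CoprodI.of a.2).prod * u) := ell_of_mul_le _ _
      _ ≤ cLen ⟨i, m⟩ + ((L.map cLen).sum + ell u) := Nat.add_le_add_left (ih u) _
      _ = _ := by ring

theorem prodList_equiv (u : CoprodI (GF H)) :
    (((Word.equiv u).toList).map fun a => CoprodI.of a.2).prod = u :=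
  Word.equiv.symm_apply_apply u

theorem ell_mul_le (u v : CoprodI (GF H)) : ell (u * v) ≤ ell u + ell v := by
  have := ell_prodList_mul_le ((Word.equiv u).toList) v
  rwa [prodList_equiv] at this

theorem ell_pow_le (u : CoprodI (GF H)) (N : ℕ) : ell (u ^ N) ≤ N * ell u := by
  induction N with
  | zero => simp
  | succ N ih =>
    rw [pow_succ]
    calc ell (u ^ N * u) ≤ ell (u ^ N) + ell u := ell_mul_le _ _
      _ ≤ N * ell u + ell u := Nat.add_le_add_right ih _
      _ = (N + 1) * ell u := by ring

theorem ell_prodW (W : Word (GF H)) : ell (W.prod) = wLen W := by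
  rw [ell]
  congr 1
  exact Word.equiv.right_inv W

/-! ### Length on the binary coproduct -/

noncomputable def lenC (w : H ∗ Multiplicative ℤ) : ℕ := ell (eH w)

@[simp] theorem lenC_one : lenC (1 : H ∗ Multiplicative ℤ) = 0 := by
  simp [lenC]

theorem lenC_mul_le (u v : H ∗ Multiplicative ℤ) : lenC (u * v) ≤ lenC u + lenC v := by
  rw [lenC, map_mul]
  exact ell_mul_le _ _

theorem lenC_pow_le (u : H ∗ Multiplicative ℤ) (N : ℕ) : lenC (u ^ N) ≤ N * lenC u := by
  rw [lenC, map_pow]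
  exact ell_pow_le _ _

theorem lenC_inl_le (h : H) : lenC (Coprod.inl h) ≤ 0 := by
  rw [lenC, eH_inl]
  simpa [cLen] using ell_of_le (i := false) (H := H) h

theorem lenC_inr_le (z : Multiplicative ℤ) :
    lenC (Coprod.inr (M := H) z) ≤ (Multiplicative.toAdd z).natAbs := by
  rw [lenC, eH_inr]
  simpa [cLen] using ell_of_le (i := true) (H := H) (ULift.up z)

/-- The pumping lemma: a linear lower bound on lengths of powers gives a lower
bound on the length of every conjugate. -/
theorem pump {u : H ∗ Multiplicative ℤ} {n : ℕ}
    (hu : ∀ N : ℕ, N * n ≤ lenC (u ^ N)) (c : H ∗ Multiplicative ℤ) :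
    n ≤ lenC (c * u * c⁻¹) := by
  by_contra hlt
  push_neg at hlt
  set m := lenC (c * u * c⁻¹) with hm
  set C := lenC c⁻¹ + lenC c with hC
  have key : ∀ N : ℕ, N * n ≤ C + N * m := by
    intro N
    have h1 : u ^ N = c⁻¹ * ((c * u * c⁻¹) ^ N * c) := by
      rw [conj_pow]
      group
    calc N * n ≤ lenC (u ^ N) := hu N
      _ = lenC (c⁻¹ * ((c * u * c⁻¹) ^ N * c)) := by rw [← h1]
      _ ≤ lenC c⁻¹ + lenC ((c * u * c⁻¹) ^ N * c) := lenC_mul_le _ _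
      _ ≤ lenC c⁻¹ + (lenC ((c * u * c⁻¹) ^ N) + lenC c) :=
          Nat.add_le_add_left (lenC_mul_le _ _) _
      _ ≤ lenC c⁻¹ + (N * m + lenC c) := Nat.add_le_add_left
          (Nat.add_le_add_right (lenC_pow_le _ _) _) _
      _ = C + N * m := by ring
  have h2 := key (C + 1)
  have h3 : (C + 1) * (m + 1) ≤ (C + 1) * n := Nat.mul_le_mul_left _ hlt
  nlinarith [h2, h3]


-- xgen lemmas
theorem xgen_zpow (a : ℤ) : xgen ^ a = Multiplicative.ofAdd a := by
  simp [xgen, ← ofAdd_zsmul, smul_eq_mul]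

@[simp] theorem toAdd_xgen_zpow (a : ℤ) : Multiplicative.toAdd (xgen ^ a) = a := by
  rw [xgen_zpow]; rfl

theorem xgen_zpow_add (a b : ℤ) : xgen ^ a * xgen ^ b = xgen ^ (a + b) := (zpow_add _ _ _).symm

theorem xgen_zpow_eq_one_iff {a : ℤ} : xgen ^ a = 1 ↔ a = 0 := by
  constructor
  · intro h
    have := congrArg Multiplicative.toAdd h
    rw [toAdd_xgen_zpow] at this
    simpa using this
  · rintro rfl; simp

theorem xgen_surj (z : Multiplicative ℤ) : xgen ^ (Multiplicative.toAdd z) = z := by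
  rw [xgen_zpow]; rfl

-- bsum
def bsum (l : List (ℤ × H)) : ℕ := (l.map fun p => p.1.natAbs).sum

@[simp] theorem bsum_nil : bsum ([] : List (ℤ × H)) = 0 := rfl
@[simp] theorem bsum_cons (p : ℤ × H) (l : List (ℤ × H)) :
    bsum (p :: l) = p.1.natAbs + bsum l := by simp [bsum]
@[simp] theorem bsum_append (l l' : List (ℤ × H)) : bsum (l ++ l') = bsum l + bsum l' := by
  simp [bsum]

-- coprodExpr algebra
theorem coprodExpr_nil (h₀ : H) : coprodExpr h₀ [] = Coprod.inl h₀ := by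
  simp [coprodExpr]

@[simp] theorem coprodExpr_one_nil : coprodExpr (1 : H) [] = 1 := by
  simp [coprodExpr]

theorem coprodExpr_cons (h₀ : H) (p : ℤ × H) (l : List (ℤ × H)) :
    coprodExpr h₀ (p :: l) = Coprod.inl h₀ * Coprod.inr (xgen ^ p.1) * coprodExpr p.2 l := by
  simp [coprodExpr, mul_assoc]

theorem coprodExpr_append (h₀ : H) (l l' : List (ℤ × H)) :
    coprodExpr h₀ (l ++ l') = coprodExpr h₀ l * coprodExpr 1 l' := by
  simp [coprodExpr, mul_assoc]

theorem inl_mul_coprodExpr (h h₀ : H) (l : List (ℤ × H)) :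
    Coprod.inl h * coprodExpr h₀ l = coprodExpr (h * h₀) l := by
  simp [coprodExpr, mul_assoc]

theorem coprodExpr_eq_inl_mul (h₀ : H) (l : List (ℤ × H)) :
    coprodExpr h₀ l = Coprod.inl h₀ * coprodExpr 1 l := by
  rw [inl_mul_coprodExpr, mul_one]

theorem coprodExpr_mul_inr (h₀ : H) (l : List (ℤ × H)) (s : ℤ) :
    coprodExpr h₀ l * Coprod.inr (xgen ^ s) = coprodExpr h₀ (l ++ [(s, 1)]) := by
  rw [coprodExpr_append]
  simp [coprodExpr, mul_assoc]

theorem coprodExpr_mul_inl (h₀ : H) (l : List (ℤ × H)) (p : ℤ × H) (c : H) :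
    coprodExpr h₀ (l ++ [p]) * Coprod.inl c = coprodExpr h₀ (l ++ [(p.1, p.2 * c)]) := by
  rw [coprodExpr_append, coprodExpr_append]
  simp [coprodExpr, mul_assoc]

theorem inr_mul_coprodExpr (s : ℤ) (p : ℤ × H) (l : List (ℤ × H)) :
    Coprod.inr (xgen ^ s) * coprodExpr 1 (p :: l) = coprodExpr 1 ((s + p.1, p.2) :: l) := by
  rw [coprodExpr_cons, coprodExpr_cons]
  simp [← xgen_zpow_add, mul_assoc]

theorem coprodExpr_merge (h₀ : H) (l₁ : List (ℤ × H)) (β β' : ℤ) (c' : H) (l₂ : List (ℤ × H)) :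
    coprodExpr h₀ (l₁ ++ (β, 1) :: (β', c') :: l₂) =
      coprodExpr h₀ (l₁ ++ (β + β', c') :: l₂) := by
  rw [coprodExpr_append, coprodExpr_append]
  congr 1
  rw [coprodExpr_cons, coprodExpr_cons, coprodExpr_cons]
  simp [← xgen_zpow_add, mul_assoc]

theorem coprodExpr_zero_cons (h₀ : H) (c : H) (l : List (ℤ × H)) :
    coprodExpr h₀ ((0, c) :: l) = coprodExpr (h₀ * c) l := by
  rw [coprodExpr_cons, coprodExpr_eq_inl_mul c l, ← mul_assoc]
  simp [inl_mul_coprodExpr, mul_assoc]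

-- every element has a representation
theorem repr_mul (h₀ : H) (l : List (ℤ × H)) (h₀' : H) (l' : List (ℤ × H)) :
    ∃ h₁ l₁, coprodExpr h₀ l * coprodExpr h₀' l' = coprodExpr h₁ l₁ := by
  rcases List.eq_nil_or_concat l with rfl | ⟨t, p, rfl⟩
  · refine ⟨h₀ * h₀', l', ?_⟩
    rw [coprodExpr_nil, coprodExpr_eq_inl_mul h₀' l', ← mul_assoc, ← Coprod.inl.map_mul,
      inl_mul_coprodExpr, mul_one]
  · refine ⟨h₀, (t ++ [(p.1, p.2 * h₀')]) ++ l', ?_⟩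
    rw [List.concat_eq_append] 
    rw [coprodExpr_eq_inl_mul h₀' l', ← mul_assoc, coprodExpr_mul_inl,
      coprodExpr_append h₀ (t ++ [(p.1, p.2 * h₀')]) l', coprodExpr_append]

theorem exists_repr (w : H ∗ Multiplicative ℤ) : ∃ h₀ l, w = coprodExpr h₀ l := by
  induction w using Coprod.induction_on with
  | inl m => exact ⟨m, [], (coprodExpr_nil m).symm⟩
  | inr z =>
    refine ⟨1, [(Multiplicative.toAdd z, 1)], ?_⟩
    rw [show ((Multiplicative.toAdd z : ℤ), (1:H)) :: ([] : List (ℤ × H)) =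
      [] ++ [((Multiplicative.toAdd z : ℤ), (1:H))] from rfl]
    rw [← coprodExpr_mul_inr, coprodExpr_one_nil, one_mul, xgen_surj]
  | mul x y hx hy =>
    obtain ⟨h₀, l, rfl⟩ := hx
    obtain ⟨h₀', l', rfl⟩ := hy
    exact repr_mul _ _ _ _

end Stmt18

namespace Stmt18

open Monoid.CoprodI Multiplicative

variable {H : Type*} [Group H]

/-! ### Strictly reduced lists and their words -/

def SRed (l : List (ℤ × H)) : Prop := (∀ p ∈ l, p.1 ≠ 0) ∧ (∀ p ∈ l, p.2 ≠ 1)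

def letters (l : List (ℤ × H)) : List (Σ b, GF H b) :=
  l.flatMap fun p => [⟨true, ULift.up (xgen ^ p.1)⟩, ⟨false, p.2⟩]

@[simp] theorem letters_nil : letters ([] : List (ℤ × H)) = [] := rfl

@[simp] theorem letters_cons (p : ℤ × H) (l : List (ℤ × H)) :
    letters (p :: l) =
      ⟨true, ULift.up (xgen ^ p.1)⟩ :: ⟨false, p.2⟩ :: letters l := rfl

theorem letters_chain' (l : List (ℤ × H)) :
    (letters l).IsChain (fun a b => a.1 ≠ b.1) := by
  induction l with
  | nil => simp
  | cons p l ih =>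
    rw [letters_cons, List.isChain_cons_cons]
    refine ⟨by simp, List.isChain_cons.mpr ⟨?_, ih⟩⟩
    intro y hy
    cases l with
    | nil => simp at hy
    | cons q t =>
      rw [letters_cons] at hy
      simp only [List.head?_cons, Option.mem_some_iff] at hy
      subst hy
      simp

theorem up_ne_one {z : Multiplicative ℤ} (hz : z ≠ 1) :
    (ULift.up z : ULift (Multiplicative ℤ)) ≠ 1 := by
  intro h
  exact hz (congrArg ULift.down h)

def mkWord (l : List (ℤ × H)) (hS : SRed l) : Word (GF H) where
  toList := letters l
  ne_one := by
    intro a ha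
    simp only [letters, List.mem_flatMap, List.mem_cons, List.mem_singleton] at ha
    obtain ⟨p, hp, rfl | rfl | h⟩ := ha
    · exact up_ne_one fun h => (hS.1 p hp) (xgen_zpow_eq_one_iff.mp h)
    · exact hS.2 p hp
    · exact absurd h List.not_mem_nil
  chain_ne := letters_chain' l

def prodL (L : List (Σ b, GF H b)) : CoprodI (GF H) :=
  (L.map fun a => CoprodI.of a.2).prod

theorem lettersProd (l : List (ℤ × H)) : prodL (letters l) = eH (coprodExpr 1 l) := by
  induction l with
  | nil => simp [prodL]
  | cons p t ih =>
    rw [letters_cons]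
    show CoprodI.of _ * (CoprodI.of _ * prodL (letters t)) = _
    rw [ih, coprodExpr_cons, coprodExpr_eq_inl_mul p.2 t,
      map_mul, map_mul, map_mul, eH_inl, eH_inl, eH_inr, map_one, one_mul]

theorem prod_mkWord (l : List (ℤ × H)) (hS : SRed l) :
    (mkWord l hS).prod = eH (coprodExpr 1 l) :=
  lettersProd l

theorem lettersSum (l : List (ℤ × H)) : ((letters l).map cLen).sum = bsum l := by
  induction l with
  | nil => simp
  | cons p t ih => simp [ih, cLen, bsum, xgen]

theorem wLen_mkWord (l : List (ℤ × H)) (hS : SRed l) :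
    wLen (mkWord l hS) = bsum l :=
  lettersSum l

theorem lenC_coprodExpr_sred (l : List (ℤ × H)) (hS : SRed l) :
    lenC (coprodExpr 1 l) = bsum l := by
  rw [lenC, ← prod_mkWord l hS, ell_prodW, wLen_mkWord]

theorem lenC_inr_eq (z : Multiplicative ℤ) :
    lenC (Coprod.inr (M := H) z) = (Multiplicative.toAdd z).natAbs := by
  by_cases hz : z = 1
  · subst hz; simp
  · have hW : ∃ W : Word (GF H), W.prod = eH (Coprod.inr (M := H) z) ∧
        wLen W = (Multiplicative.toAdd z).natAbs := by
      refine ⟨⟨[⟨true, ULift.up z⟩], ?_, List.isChain_singleton _⟩, ?_, ?_⟩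
      · intro a ha
        simp only [List.mem_singleton] at ha
        subst ha
        exact up_ne_one hz
      · simp [Word.prod]
      · simp [wLen, cLen]
    obtain ⟨W, hW1, hW2⟩ := hW
    rw [lenC, ← hW1, ell_prodW, hW2]

theorem lenC_coprodExpr_le (h₀ : H) (l : List (ℤ × H)) :
    lenC (coprodExpr h₀ l) ≤ bsum l := by
  induction l generalizing h₀ with
  | nil => simpa [coprodExpr_nil] using lenC_inl_le h₀
  | cons p t ih =>
    rw [coprodExpr_cons, bsum_cons]
    calc lenC (Coprod.inl h₀ * Coprod.inr (xgen ^ p.1) * coprodExpr p.2 t)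
        ≤ lenC (Coprod.inl h₀ * Coprod.inr (xgen ^ p.1)) + lenC (coprodExpr p.2 t) :=
          lenC_mul_le _ _
      _ ≤ (lenC (Coprod.inl h₀) + lenC (Coprod.inr (M := H) (xgen ^ p.1))) +
            lenC (coprodExpr p.2 t) := Nat.add_le_add_right (lenC_mul_le _ _) _
      _ ≤ (0 + p.1.natAbs) + bsum t := by
          have := lenC_inl_le h₀
          have h2 := lenC_inr_le (H := H) (xgen ^ p.1)
          rw [toAdd_xgen_zpow] at h2
          exact Nat.add_le_add (Nat.add_le_add this h2) (ih p.2)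
      _ = p.1.natAbs + bsum t := by ring

/-! ### Powers of strictly reduced expressions -/

def powList : ℕ → List (ℤ × H) → List (ℤ × H)
  | 0, _ => []
  | N + 1, l => l ++ powList N l

theorem coprodExpr_pow (l : List (ℤ × H)) (N : ℕ) :
    (coprodExpr 1 l) ^ N = coprodExpr 1 (powList N l) := by
  induction N with
  | zero => simp [powList]
  | succ N ih => rw [pow_succ', ih, powList, coprodExpr_append]

theorem bsum_powList (l : List (ℤ × H)) (N : ℕ) : bsum (powList N l) = N * bsum l := by
  induction N with
  | zero => simp [powList]
  | succ N ih => rw [powList, bsum_append, ih]; ring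

theorem sred_powList (l : List (ℤ × H)) (hS : SRed l) (N : ℕ) : SRed (powList N l) := by
  induction N with
  | zero => exact ⟨by simp [powList], by simp [powList]⟩
  | succ N ih =>
    refine ⟨?_, ?_⟩ <;> intro p hp <;> rw [powList, List.mem_append] at hp
    · exact hp.elim (hS.1 p) (ih.1 p)
    · exact hp.elim (hS.2 p) (ih.2 p)

/-! ### Degree computations -/

theorem degree_le_of_repr {w : H ∗ Multiplicative ℤ} {h₀ : H} {l : List (ℤ × H)}
    (hw : w = coprodExpr h₀ l) : degree w ≤ bsum l :=
  Nat.sInf_le ⟨1, h₀, l, by simpa using hw, rfl⟩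

theorem conj_repr_ge {w : H ∗ Multiplicative ℤ} {c : H ∗ Multiplicative ℤ} {h₀ : H}
    {l : List (ℤ × H)} (hw : c * w * c⁻¹ = coprodExpr h₀ l) : degree w ≤ bsum l :=
  Nat.sInf_le ⟨c, h₀, l, hw, rfl⟩

theorem le_degree {w : H ∗ Multiplicative ℤ} {n : ℕ}
    (h : ∀ (c : H ∗ Multiplicative ℤ) (h₀ : H) (l : List (ℤ × H)),
      c * w * c⁻¹ = coprodExpr h₀ l → n ≤ bsum l) : n ≤ degree w := by
  obtain ⟨h₀, l, hw⟩ := exists_repr w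
  refine le_csInf ⟨bsum l, 1, h₀, l, by simpa using hw, rfl⟩ ?_
  rintro m ⟨c, h₀', l', hl, rfl⟩
  exact h c h₀' l' hl

/-- The degree of a strictly reduced expression is its literal sum. -/
theorem degree_coprodExpr_sred {u : H ∗ Multiplicative ℤ} (l : List (ℤ × H))
    (hS : SRed l) (hu : u = coprodExpr 1 l) : degree u = bsum l := by
  refine le_antisymm (degree_le_of_repr hu) (le_degree ?_)
  intro c h₀ l' hl
  have hpow : ∀ N : ℕ, N * bsum l ≤ lenC (u ^ N) := by
    intro N
    rw [hu, coprodExpr_pow, lenC_coprodExpr_sred _ (sred_powList l hS N), bsum_powList]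
  calc bsum l ≤ lenC (c * u * c⁻¹) := pump hpow c
    _ = lenC (coprodExpr h₀ l') := by rw [hl]
    _ ≤ bsum l' := lenC_coprodExpr_le _ _

theorem inr_xgen_pow (γ : ℤ) (N : ℕ) :
    (Coprod.inr (M := H) (xgen ^ γ)) ^ N = Coprod.inr (M := H) (xgen ^ (γ * N)) := by
  rw [← map_pow, ← zpow_natCast (xgen ^ γ) N, ← zpow_mul]

theorem degree_inr (γ : ℤ) : degree (Coprod.inr (M := H) (xgen ^ γ)) = γ.natAbs := by
  have hrepr : Coprod.inr (M := H) (xgen ^ γ) = coprodExpr 1 [(γ, 1)] := by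
    simp [coprodExpr]
  refine le_antisymm ?_ (le_degree ?_)
  · simpa [bsum] using degree_le_of_repr hrepr
  · intro c h₀ l' hl
    have hpow : ∀ N : ℕ, N * γ.natAbs ≤ lenC ((Coprod.inr (M := H) (xgen ^ γ)) ^ N) := by
      intro N
      rw [inr_xgen_pow, lenC_inr_eq, toAdd_xgen_zpow, Int.natAbs_mul]
      simp [mul_comm]
    calc γ.natAbs ≤ lenC (c * Coprod.inr (M := H) (xgen ^ γ) * c⁻¹) := pump hpow c
      _ = lenC (coprodExpr h₀ l') := by rw [hl]
      _ ≤ bsum l' := lenC_coprodExpr_le _ _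

end Stmt18

namespace Stmt18

open Monoid.CoprodI Multiplicative

variable {H : Type*} [Group H]

/-! ### Reduction of representations -/

def Red (l : List (ℤ × H)) : Prop := (∀ p ∈ l, p.1 ≠ 0) ∧ (∀ p ∈ l.dropLast, p.2 ≠ 1)

theorem coprodExpr_singleton (p : ℤ × H) :
    coprodExpr (1 : H) [p] = Coprod.inr (xgen ^ p.1) * Coprod.inl p.2 := by
  simp [coprodExpr]

theorem reduce (l : List (ℤ × H)) (h₀ : H) :
    ∃ h₁ l₁, coprodExpr h₀ l = coprodExpr h₁ l₁ ∧ bsum l₁ ≤ bsum l ∧ Red l₁ := by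
  induction l using List.reverseRecOn with
  | nil => exact ⟨h₀, [], rfl, le_rfl, by simp [Red], by simp [Red]⟩
  | append_singleton t p ih =>
    obtain ⟨h₁, t₁, he, hs, hr⟩ := ih
    obtain ⟨β, c⟩ := p
    have key : coprodExpr h₀ (t ++ [(β, c)]) =
        coprodExpr h₁ t₁ * Coprod.inr (xgen ^ β) * Coprod.inl c := by
      rw [coprodExpr_append, he, coprodExpr_singleton, mul_assoc]
    by_cases hβ : β = 0
    · subst hβ
      rw [zpow_zero, map_one, mul_one] at key
      rcases List.eq_nil_or_concat t₁ with rfl | ⟨t₂, q, rfl⟩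
      · refine ⟨h₁ * c, [], ?_, by simp, by simp [Red]⟩
        rw [key, coprodExpr_nil, coprodExpr_nil, map_mul]
      · rw [List.concat_eq_append] at *
        rw [coprodExpr_mul_inl] at key
        refine ⟨h₁, t₂ ++ [(q.1, q.2 * c)], key, ?_, ?_, ?_⟩
        · simpa [bsum] using hs
        · intro r hr'
          rw [List.mem_append, List.mem_singleton] at hr'
          rcases hr' with h | rfl
          · exact hr.1 r (List.mem_append_left _ h)
          · exact hr.1 q (List.mem_append_right _ (List.mem_singleton_self q))
        · intro r hr'
          rw [List.dropLast_concat] at hr'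
          exact hr.2 r (by rw [List.dropLast_concat]; exact hr')
    · have key2 : coprodExpr h₀ (t ++ [(β, c)]) = coprodExpr h₁ (t₁ ++ [(β, c)]) := by
        rw [key, mul_assoc, ← coprodExpr_singleton (β, c), ← coprodExpr_append]
      rcases List.eq_nil_or_concat t₁ with rfl | ⟨t₂, q, rfl⟩
      · refine ⟨h₁, [(β, c)], by simpa using key2, ?_, ?_, by simp⟩
        · simpa [bsum] using Nat.le_add_left _ _
        · intro r hr'
          rw [List.mem_singleton] at hr'
          subst hr'
          exact hβ
      · rw [List.concat_eq_append] at *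
        by_cases hq : q.2 = 1
        · have key3 : coprodExpr h₀ (t ++ [(β, c)]) =
              coprodExpr h₁ (t₂ ++ [(q.1 + β, c)]) := by
            rw [key2]
            have : t₂ ++ [q] ++ [(β, c)] = t₂ ++ (q.1, (1:H)) :: (β, c) :: [] := by
              rw [← hq]
              simp
            rw [this, coprodExpr_merge]
          by_cases hqβ : q.1 + β = 0
          · rw [hqβ] at key3
            rcases List.eq_nil_or_concat t₂ with rfl | ⟨t₃, r, rfl⟩
            · refine ⟨h₁ * c, [], ?_, by simp, by simp [Red]⟩
              rw [key3]
              show coprodExpr h₁ ([] ++ [((0:ℤ), c)]) = _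
              rw [coprodExpr_append, coprodExpr_nil, coprodExpr_singleton]
              simp [map_mul, coprodExpr_nil]
            · rw [List.concat_eq_append] at *
              have key4 : coprodExpr h₀ (t ++ [(β, c)]) =
                  coprodExpr h₁ (t₃ ++ [(r.1, r.2 * c)]) := by
                rw [key3, show t₃ ++ [r] ++ [((0:ℤ), c)] = (t₃ ++ [r]) ++ [((0:ℤ),c)] by simp,
                  coprodExpr_append, coprodExpr_singleton, zpow_zero, map_one, one_mul,
                  ← coprodExpr_mul_inl]
              refine ⟨h₁, t₃ ++ [(r.1, r.2 * c)], key4, ?_, ?_, ?_⟩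
              · have h1 : bsum (t₃ ++ [(r.1, r.2 * c)]) = bsum (t₃ ++ [r]) := by simp [bsum]
                have h2 : bsum (t₃ ++ [r]) ≤ bsum ((t₃ ++ [r]) ++ [q]) := by
                  simp [bsum]
                have h3 : bsum ((t₃ ++ [r]) ++ [q]) ≤ bsum t := hs
                have h4 : bsum t ≤ bsum (t ++ [(β, c)]) := by simp [bsum]
                omega
              · intro s hs'
                rw [List.mem_append, List.mem_singleton] at hs'
                rcases hs' with h | rfl
                · exact hr.1 s (by simp [h])
                · exact hr.1 r (by simp)
              · intro s hs'
                rw [List.dropLast_concat] at hs'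
                exact hr.2 s (by rw [List.dropLast_concat]; simp [hs'])
          · refine ⟨h₁, t₂ ++ [(q.1 + β, c)], key3, ?_, ?_, ?_⟩
            · have tri : (q.1 + β).natAbs ≤ q.1.natAbs + β.natAbs := Int.natAbs_add_le _ _
              have h2 : bsum (t₂ ++ [q]) ≤ bsum t := hs
              have h3 : bsum (t₂ ++ [(q.1 + β, c)]) = bsum t₂ + (q.1 + β).natAbs := by
                simp [bsum]
              have h4 : bsum (t₂ ++ [q]) = bsum t₂ + q.1.natAbs := by simp [bsum]
              have h5 : bsum (t ++ [(β, c)]) = bsum t + β.natAbs := by simp [bsum]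
              omega
            · intro s hs'
              rw [List.mem_append, List.mem_singleton] at hs'
              rcases hs' with h | rfl
              · exact hr.1 s (by simp [h])
              · exact hqβ
            · intro s hs'
              rw [List.dropLast_concat] at hs'
              exact hr.2 s (by rw [List.dropLast_concat]; exact hs')
        · refine ⟨h₁, (t₂ ++ [q]) ++ [(β, c)], key2, ?_, ?_, ?_⟩
          · have : bsum ((t₂ ++ [q]) ++ [(β, c)]) = bsum (t₂ ++ [q]) + β.natAbs := by
              simp [bsum]; omega
            have h5 : bsum (t ++ [(β, c)]) = bsum t + β.natAbs := by simp [bsum]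
            omega
          · intro s hs'
            rw [List.mem_append, List.mem_singleton] at hs'
            rcases hs' with h | rfl
            · exact hr.1 s h
            · exact hβ
          · intro s hs'
            rw [List.dropLast_concat] at hs'
            rw [List.mem_append, List.mem_singleton] at hs'
            rcases hs' with h | rfl
            · exact hr.2 s (by rw [List.dropLast_concat]; exact h)
            · exact hq

end Stmt18

namespace Stmt18

open Monoid.CoprodI Multiplicative

variable {H : Type*} [Group H]

theorem conj_conj (a b w : H ∗ Multiplicative ℤ) :
    a * (b * w * b⁻¹) * a⁻¹ = (a * b) * w * (a * b)⁻¹ := by group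

/-- Normalization: any element of positive degree `d` has a conjugate which is either a
strictly reduced cyclically reduced expression of total `x`-length `d`, or a pure power
of `x` of length `d`. -/
theorem normalize {w₀ : H ∗ Multiplicative ℤ} {d : ℕ} (hdeg : degree w₀ = d) (hd0 : d ≠ 0) :
    ∃ c : H ∗ Multiplicative ℤ,
      (∃ l, c * w₀ * c⁻¹ = coprodExpr 1 l ∧ SRed l ∧ bsum l = d ∧ l ≠ []) ∨
      (∃ γ : ℤ, c * w₀ * c⁻¹ = Coprod.inr (xgen ^ γ) ∧ γ.natAbs = d) := by
  -- the degree is attained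
  have hne : { n | ∃ (c : H ∗ Multiplicative ℤ) (h₀ : H) (l : List (ℤ × H)),
      c * w₀ * c⁻¹ = coprodExpr h₀ l ∧ (l.map fun p => p.1.natAbs).sum = n }.Nonempty := by
    obtain ⟨h₀, l, hw⟩ := exists_repr w₀
    exact ⟨bsum l, 1, h₀, l, by simpa using hw, rfl⟩
  have hmem := Nat.sInf_mem hne
  rw [show sInf _ = degree w₀ from rfl, hdeg] at hmem
  obtain ⟨c₀, h₀, l₀, hc₀, hsum₀⟩ := hmem
  have MIN : ∀ (c : H ∗ Multiplicative ℤ) (h₀' : H) (l' : List (ℤ × H)),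
      c * w₀ * c⁻¹ = coprodExpr h₀' l' → d ≤ bsum l' := by
    intro c h₀' l' h
    rw [← hdeg]
    exact conj_repr_ge h
  obtain ⟨h₁, l₁, he, hs, hred⟩ := reduce l₀ h₀
  have hc₁ : c₀ * w₀ * c₀⁻¹ = coprodExpr h₁ l₁ := by rw [hc₀, he]
  have hbl₁ : bsum l₁ = d := le_antisymm (hsum₀ ▸ hs) (MIN _ _ _ hc₁)
  rcases List.eq_nil_or_concat l₁ with rfl | ⟨t, p, rfl⟩
  · exact absurd hbl₁.symm (by simpa using hd0)
  rw [List.concat_eq_append] at *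
  obtain ⟨β, c⟩ := p
  -- conjugate by `inl h₁⁻¹` to put the head coefficient at the end
  have hX : (Coprod.inl h₁⁻¹ * c₀) * w₀ * (Coprod.inl h₁⁻¹ * c₀)⁻¹ =
      coprodExpr 1 (t ++ [(β, c * h₁)]) := by
    rw [← conj_conj, hc₁, inl_mul_coprodExpr, inv_mul_cancel, ← map_inv, inv_inv,
      coprodExpr_mul_inl]
  have hfst : ∀ q ∈ t ++ [(β, c)], q.1 ≠ 0 := hred.1
  have hsnd : ∀ q ∈ t, q.2 ≠ 1 := by
    intro q hq
    exact hred.2 q (by rw [List.dropLast_concat]; exact hq)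
  by_cases hch : c * h₁ = 1
  · -- the final coefficient dies; the word ends in a power of x
    rw [hch] at hX
    cases t with
    | nil =>
      -- pure power of x
      refine ⟨Coprod.inl h₁⁻¹ * c₀, Or.inr ⟨β, ?_, ?_⟩⟩
      · rw [hX]
        show coprodExpr 1 ([] ++ [(β, 1)]) = _
        rw [← coprodExpr_mul_inr, coprodExpr_one_nil, one_mul]
      · simpa [bsum] using hbl₁
    | cons p₁ t' =>
      obtain ⟨β₁, c₁⟩ := p₁
      -- rotate the trailing x-power to the front
      have hX2 : (Coprod.inr (xgen ^ β) * (Coprod.inl h₁⁻¹ * c₀)) * w₀ *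
          (Coprod.inr (xgen ^ β) * (Coprod.inl h₁⁻¹ * c₀))⁻¹ =
          coprodExpr 1 ((β + β₁, c₁) :: t') := by
        have hA : Coprod.inr (M := H) (xgen ^ β) *
            (coprodExpr 1 ((β₁, c₁) :: t') * Coprod.inr (M := H) (xgen ^ β)) *
            (Coprod.inr (M := H) (xgen ^ β))⁻¹ =
            Coprod.inr (M := H) (xgen ^ β) * coprodExpr 1 ((β₁, c₁) :: t') := by group
        rw [← conj_conj, hX, ← coprodExpr_mul_inr, hA, inr_mul_coprodExpr]
      have hd2 := MIN _ _ _ hX2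
      have tri : (β + β₁).natAbs ≤ β.natAbs + β₁.natAbs := Int.natAbs_add_le _ _
      have hb1 : bsum (((β₁, c₁) :: t') ++ [(β, c)]) = β₁.natAbs + bsum t' + β.natAbs := by
        simp [bsum]; omega
      have hb2 : bsum ((β + β₁, c₁) :: t') = (β + β₁).natAbs + bsum t' := by simp [bsum]
      have hβ0 : β.natAbs ≠ 0 := by
        simpa using Int.natAbs_ne_zero.mpr (hfst (β, c) (by simp))
      have hβ₁0 : β₁.natAbs ≠ 0 := by
        simpa using Int.natAbs_ne_zero.mpr (hfst (β₁, c₁) (by simp))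
      have heq : (β + β₁).natAbs + bsum t' = d ∧ (β + β₁).natAbs ≠ 0 := by
        constructor <;> omega
      refine ⟨Coprod.inr (xgen ^ β) * (Coprod.inl h₁⁻¹ * c₀),
        Or.inl ⟨(β + β₁, c₁) :: t', hX2, ⟨?_, ?_⟩, by rw [hb2]; exact heq.1, by simp⟩⟩
      · intro q hq
        rcases List.mem_cons.mp hq with rfl | hq'
        · intro h
          exact heq.2 (by rw [show β + β₁ = 0 from h]; simp)
        · exact hfst q (by simp [hq'])
      · intro q hq
        rcases List.mem_cons.mp hq with rfl | hq'
        · exact hsnd (β₁, c₁) (by simp)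
        · exact hsnd q (by simp [hq'])
  · refine ⟨Coprod.inl h₁⁻¹ * c₀, Or.inl ⟨t ++ [(β, c * h₁)], hX, ⟨?_, ?_⟩, ?_, by simp⟩⟩
    · intro q hq
      rw [List.mem_append, List.mem_singleton] at hq
      rcases hq with h | rfl
      · exact hfst q (by simp [h])
      · exact hfst (β, c) (by simp)
    · intro q hq
      rw [List.mem_append, List.mem_singleton] at hq
      rcases hq with h | rfl
      · exact hsnd q h
      · exact hch
    · have : bsum (t ++ [(β, c * h₁)]) = bsum (t ++ [(β, c)]) := by simp [bsum]
      rw [this, hbl₁]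

end Stmt18

namespace Stmt18

open Monoid.CoprodI Multiplicative

variable {H : Type*} [Group H]

@[simp] theorem powList_zero (l : List (ℤ × H)) : powList 0 l = [] := rfl
@[simp] theorem powList_succ (N : ℕ) (l : List (ℤ × H)) :
    powList (N + 1) l = l ++ powList N l := rfl

theorem powList_succ' (l : List (ℤ × H)) (N : ℕ) :
    powList (N + 1) l = powList N l ++ l := by
  induction N with
  | zero => simp
  | succ N ih =>
    calc powList (N + 1 + 1) l = l ++ powList (N + 1) l := rfl
      _ = l ++ (powList N l ++ l) := by rw [ih]
      _ = (l ++ powList N l) ++ l := by simp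
      _ = powList (N + 1) l ++ l := rfl

theorem sred_nil : SRed ([] : List (ℤ × H)) := ⟨by simp, by simp⟩

theorem sred_append {l₁ l₂ : List (ℤ × H)} (h1 : SRed l₁) (h2 : SRed l₂) :
    SRed (l₁ ++ l₂) := by
  constructor <;> intro p hp <;> rcases List.mem_append.mp hp with h | h
  · exact h1.1 p h
  · exact h2.1 p h
  · exact h1.2 p h
  · exact h2.2 p h

theorem sred_cons {p : ℤ × H} {l : List (ℤ × H)} (hp1 : p.1 ≠ 0) (hp2 : p.2 ≠ 1)
    (h : SRed l) : SRed (p :: l) := by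
  constructor <;> intro q hq <;> rcases List.mem_cons.mp hq with rfl | h'
  · exact hp1
  · exact h.1 q h'
  · exact hp2
  · exact h.2 q h'

theorem sred_singleton {p : ℤ × H} (hp1 : p.1 ≠ 0) (hp2 : p.2 ≠ 1) : SRed [p] :=
  sred_cons hp1 hp2 sred_nil

theorem sred_append_left {l₁ l₂ : List (ℤ × H)} (h : SRed (l₁ ++ l₂)) : SRed l₁ :=
  ⟨fun p hp => h.1 p (List.mem_append_left _ hp), fun p hp => h.2 p (List.mem_append_left _ hp)⟩

theorem sred_append_right {l₁ l₂ : List (ℤ × H)} (h : SRed (l₁ ++ l₂)) : SRed l₂ :=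
  ⟨fun p hp => h.1 p (List.mem_append_right _ hp), fun p hp => h.2 p (List.mem_append_right _ hp)⟩

theorem sred_tail {p : ℤ × H} {l : List (ℤ × H)} (h : SRed (p :: l)) : SRed l :=
  ⟨fun q hq => h.1 q (List.mem_cons_of_mem _ hq), fun q hq => h.2 q (List.mem_cons_of_mem _ hq)⟩

/-- The key construction, cyclically-reduced case. -/
theorem constructA {v : H ∗ Multiplicative ℤ} {t : List (ℤ × H)} {q : ℤ × H}
    {β₁ : ℤ} {c₁ : H} {tl : List (ℤ × H)}
    (hdec : (β₁, c₁) :: tl = t ++ [q]) (hS : SRed ((β₁, c₁) :: tl))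
    (hv : v = coprodExpr 1 ((β₁, c₁) :: tl)) (r : ℕ) (hr : 1 ≤ r)
    {s : ℤ} {k : ℕ} (hs : s.natAbs = k) (hsk : (s + β₁).natAbs = k + β₁.natAbs) (hk : k ≠ 0)
    {h : H} (hh1 : h ≠ 1) (hqh : q.2 * h ≠ 1) :
    ∃ L, SRed L ∧ bsum L = (r + 1) * bsum ((β₁, c₁) :: tl) + 2 * k ∧
      v ^ r * Coprod.inl h * Coprod.inr (xgen ^ s) * v *
        Coprod.inr (xgen ^ (-s)) * Coprod.inl h⁻¹ = coprodExpr 1 L := by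
  obtain ⟨r, rfl⟩ : ∃ r', r = r' + 1 := ⟨r - 1, by omega⟩
  have hβ₁ : β₁ ≠ 0 := hS.1 (β₁, c₁) (by simp)
  have hc₁ : c₁ ≠ 1 := hS.2 (β₁, c₁) (by simp)
  have hq1 : q.1 ≠ 0 := hS.1 q (by rw [hdec]; simp)
  have hlist : powList r ((β₁, c₁) :: tl) ++ ((β₁, c₁) :: tl) =
      (powList r ((β₁, c₁) :: tl) ++ t) ++ [q] := by
    rw [List.append_assoc]
    exact congrArg _ hdec
  have e1 : v ^ (r + 1) = coprodExpr 1 ((powList r ((β₁, c₁) :: tl) ++ t) ++ [q]) := by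
    rw [hv, coprodExpr_pow, powList_succ', hlist]
  have e3 : v ^ (r + 1) * Coprod.inl h =
      coprodExpr 1 ((powList r ((β₁, c₁) :: tl) ++ t) ++ [(q.1, q.2 * h)]) := by
    rw [e1, coprodExpr_mul_inl]
  have e4 : v ^ (r + 1) * Coprod.inl h * Coprod.inr (xgen ^ s) =
      coprodExpr 1 (((powList r ((β₁, c₁) :: tl) ++ t) ++ [(q.1, q.2 * h)]) ++ [(s, 1)]) := by
    rw [e3, coprodExpr_mul_inr]
  have e5 : v ^ (r + 1) * Coprod.inl h * Coprod.inr (xgen ^ s) * v =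
      coprodExpr 1 (((powList r ((β₁, c₁) :: tl) ++ t) ++ [(q.1, q.2 * h)]) ++
        ((s, (1 : H)) :: (β₁, c₁) :: tl)) := by
    rw [e4, hv, ← coprodExpr_append]
    congr 1
    simp
  have e6 : v ^ (r + 1) * Coprod.inl h * Coprod.inr (xgen ^ s) * v =
      coprodExpr 1 (((powList r ((β₁, c₁) :: tl) ++ t) ++ [(q.1, q.2 * h)]) ++
        ((s + β₁, c₁) :: tl)) := by
    rw [e5, coprodExpr_merge]
  have e7 : v ^ (r + 1) * Coprod.inl h * Coprod.inr (xgen ^ s) * v *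
      Coprod.inr (xgen ^ (-s)) =
      coprodExpr 1 ((((powList r ((β₁, c₁) :: tl) ++ t) ++ [(q.1, q.2 * h)]) ++
        ((s + β₁, c₁) :: tl)) ++ [((-s : ℤ), (1 : H))]) := by
    rw [e6, coprodExpr_mul_inr]
  have e8 : v ^ (r + 1) * Coprod.inl h * Coprod.inr (xgen ^ s) * v *
      Coprod.inr (xgen ^ (-s)) * Coprod.inl h⁻¹ =
      coprodExpr 1 ((((powList r ((β₁, c₁) :: tl) ++ t) ++ [(q.1, q.2 * h)]) ++
        ((s + β₁, c₁) :: tl)) ++ [((-s : ℤ), h⁻¹)]) := by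
    rw [e7, coprodExpr_mul_inl]
    norm_num
  have hks : s ≠ 0 := fun h0 => hk (by rw [← hs, h0]; rfl)
  have hsβ : s + β₁ ≠ 0 := by
    intro h0
    rw [h0] at hsk
    have : β₁.natAbs ≠ 0 := Int.natAbs_ne_zero.mpr hβ₁
    simp at hsk
    omega
  refine ⟨_, ?_, ?_, e8⟩
  · refine sred_append (sred_append (sred_append (sred_append
      (sred_powList _ hS r) ?_) ?_) ?_) ?_
    · exact sred_append_left (hdec ▸ hS)
    · exact sred_singleton hq1 hqh
    · exact sred_cons hsβ hc₁ (sred_tail hS)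
    · exact sred_singleton (neg_ne_zero.mpr hks) (inv_ne_one.mpr hh1)
  · have b1 : bsum (powList r ((β₁, c₁) :: tl)) = r * bsum ((β₁, c₁) :: tl) :=
      bsum_powList _ r
    have b3 : bsum ((β₁, c₁) :: tl) = bsum t + q.1.natAbs := by rw [hdec]; simp [bsum]
    have b4 : (-s).natAbs = k := by simpa using hs
    have b2 : bsum ((β₁, c₁) :: tl) = β₁.natAbs + bsum tl := by simp [bsum]
    simp only [bsum_append, bsum_cons, bsum_nil, add_zero, b1, b4, hsk, add_one_mul]
    linarith [b2, b3]

end Stmt18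

namespace Stmt18

open Monoid.CoprodI Multiplicative

variable {H : Type*} [Group H]

/-- The key construction, pure-power case. -/
theorem constructB {v : H ∗ Multiplicative ℤ} {γ : ℤ} (hγ : γ ≠ 0)
    (hv : v = Coprod.inr (xgen ^ γ)) (r : ℕ) (hr : 1 ≤ r) {k : ℕ} (hk : k ≠ 0)
    {h : H} (hh1 : h ≠ 1) :
    ∃ L, SRed L ∧ bsum L = (r + 1) * γ.natAbs + 2 * k ∧
      v ^ r * Coprod.inl h * Coprod.inr (xgen ^ (k : ℤ)) * Coprod.inl h * v *
        Coprod.inl h⁻¹ * Coprod.inr (xgen ^ (-(k : ℤ))) * Coprod.inl h⁻¹ = coprodExpr 1 L := by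
  refine ⟨[(γ * r, h), ((k : ℤ), h), (γ, h⁻¹), (-(k : ℤ), h⁻¹)], ?_, ?_, ?_⟩
  · have hγr : γ * r ≠ 0 := by
      have : (r : ℤ) ≠ 0 := Int.natCast_ne_zero.mpr (by omega)
      exact mul_ne_zero hγ this
    have hkz : (k : ℤ) ≠ 0 := Int.natCast_ne_zero.mpr hk
    exact sred_cons hγr hh1 (sred_cons hkz hh1 (sred_cons hγ (inv_ne_one.mpr hh1)
      (sred_singleton (neg_ne_zero.mpr hkz) (inv_ne_one.mpr hh1))))
  · simp [bsum, Int.natAbs_mul, add_one_mul]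
    ring
  · rw [hv, inr_xgen_pow]
    simp [coprodExpr, mul_assoc]

end Stmt18

open Stmt18 in
/-- let `H` be a group with at least two distinct non-trivial elements and
`N = ker φ` for a homomorphism `φ : H ∗ ⟨x⟩ →* F` which is injective on `H`.  If `N`
contains a non-trivial element of odd degree `d`, then for every `n ≥ 3d` the subgroup
`N` contains a non-trivial element of degree `n`. -/
theorem stmt18 {H F : Type*} [Group H] [Group F]
    (hH : ∃ h₁ h₂ : H, h₁ ≠ 1 ∧ h₂ ≠ 1 ∧ h₁ ≠ h₂)
    (φ : H ∗ Multiplicative ℤ →* F)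
    (hinj : Function.Injective (φ.comp Coprod.inl))
    (d : ℕ) (hodd : Odd d)
    (hd : ∃ w ∈ φ.ker, w ≠ 1 ∧ degree w = d) :
    ∀ n : ℕ, 3 * d ≤ n → ∃ w ∈ φ.ker, w ≠ 1 ∧ degree w = n := by
  intro n hn
  classical
  obtain ⟨ha, hb, ha1, hb1, hab⟩ := hH
  obtain ⟨w₀, hker, hw0, hdeg⟩ := hd
  have hd0 : d ≠ 0 := by rintro rfl; simpa using hodd
  have hnorm : φ.ker.Normal := MonoidHom.normal_ker φ
  obtain ⟨c₀, hshape⟩ := normalize hdeg hd0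
  set v : H ∗ Multiplicative ℤ := c₀ * w₀ * c₀⁻¹ with hvdef
  have hvker : v ∈ φ.ker := hnorm.conj_mem _ hker _
  obtain ⟨R, k, hR, hnRk⟩ : ∃ R k : ℕ, 1 ≤ R ∧ n = (R + 1) * d + 2 * k := by
    obtain ⟨dd, hdd⟩ := hodd
    rcases Nat.even_or_odd n with ⟨m, hm⟩ | ⟨m, hm⟩
    · exact ⟨1, (n - 2 * d) / 2, le_rfl, by omega⟩
    · exact ⟨2, (n - 3 * d) / 2, by omega, by omega⟩
  -- helper to conclude from an exact-degree computation
  have finish : ∀ u : H ∗ Multiplicative ℤ, u ∈ φ.ker → degree u = n →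
      ∃ w ∈ φ.ker, w ≠ 1 ∧ degree w = n := by
    intro u hu hdu
    refine ⟨u, hu, ?_, hdu⟩
    intro h1
    rw [h1] at hdu
    have h2 : degree (1 : H ∗ Multiplicative ℤ) ≤ bsum ([] : List (ℤ × H)) :=
      degree_le_of_repr (show (1 : H ∗ Multiplicative ℤ) = coprodExpr (1 : H) [] by simp)
    simp [bsum] at h2
    omega
  by_cases hk : k = 0
  · -- no pumping needed: a pure power works
    subst hk
    rcases hshape with ⟨l, hvl, hS, hbl, hlne⟩ | ⟨γ, hvγ, hγd⟩
    · refine finish (v ^ (R + 1)) (pow_mem hvker _) ?_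
      have hrepr : v ^ (R + 1) = coprodExpr 1 (powList (R + 1) l) := by
        rw [hvl, coprodExpr_pow]
      rw [degree_coprodExpr_sred _ (sred_powList _ hS _) hrepr, bsum_powList, hbl, hnRk]
      ring
    · refine finish (v ^ (R + 1)) (pow_mem hvker _) ?_
      have hrepr : v ^ (R + 1) = Coprod.inr (xgen ^ (γ * ((R + 1 : ℕ) : ℤ))) := by
        rw [hvγ, inr_xgen_pow]
      rw [hrepr, degree_inr, Int.natAbs_mul, hγd, Int.natAbs_natCast, hnRk]
      ring
  · rcases hshape with ⟨l, hvl, hS, hbl, hlne⟩ | ⟨γ, hvγ, hγd⟩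
    · -- cyclically reduced case
      obtain ⟨p₁, tl, rfl⟩ : ∃ p₁ tl, l = p₁ :: tl := by
        cases l with
        | nil => exact absurd rfl hlne
        | cons a l => exact ⟨a, l, rfl⟩
      obtain ⟨β₁, c₁⟩ := p₁
      rcases List.eq_nil_or_concat ((β₁, c₁) :: tl) with habs | ⟨t, q, hdec⟩
      · simp at habs
      rw [List.concat_eq_append] at hdec
      -- choose the conjugating H-letter
      set h : H := if q.2 * ha = 1 then hb else ha with hhdef
      have hh1 : h ≠ 1 := by rw [hhdef]; split_ifs <;> assumption
      have hqh : q.2 * h ≠ 1 := by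
        rw [hhdef]
        split_ifs with hqa
        · intro hqb
          have h1 : q.2⁻¹ = ha := inv_eq_of_mul_eq_one_right hqa
          have h2 : q.2⁻¹ = hb := inv_eq_of_mul_eq_one_right hqb
          exact hab (h1 ▸ h2)
        · exact hqa
      -- choose the sign of the x-power
      set s : ℤ := if 0 ≤ β₁ then (k : ℤ) else -(k : ℤ) with hsdef
      have hβ₁ : β₁ ≠ 0 := hS.1 (β₁, c₁) (by simp)
      have hs : s.natAbs = k := by rw [hsdef]; split_ifs <;> simp
      have hsk : (s + β₁).natAbs = k + β₁.natAbs := by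
        rw [hsdef]; split_ifs with hsign <;> omega
      obtain ⟨L, hSL, hbL, heq⟩ := constructA hdec hS hvl R hR hs hsk hk hh1 hqh
      set u : H ∗ Multiplicative ℤ := v ^ R * Coprod.inl h * Coprod.inr (xgen ^ s) * v *
        Coprod.inr (xgen ^ (-s)) * Coprod.inl h⁻¹ with hudef
      have humem : u ∈ φ.ker := by
        have hrw : u = v ^ R * ((Coprod.inl h * Coprod.inr (xgen ^ s)) * v *
            (Coprod.inl h * Coprod.inr (xgen ^ s))⁻¹) := by
          rw [hudef, zpow_neg, map_inv, map_inv]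
          group
        rw [hrw]
        exact mul_mem (pow_mem hvker _) (hnorm.conj_mem _ hvker _)
      refine finish u humem ?_
      rw [degree_coprodExpr_sred L hSL heq, hbL, hbl]
      exact hnRk.symm
    · -- pure power case
      obtain ⟨L, hSL, hbL, heq⟩ := constructB (by
          intro h0
          rw [h0] at hγd
          simp at hγd
          omega) hvγ R hR hk ha1
      set u : H ∗ Multiplicative ℤ := v ^ R * Coprod.inl ha * Coprod.inr (xgen ^ (k : ℤ)) *
        Coprod.inl ha * v * Coprod.inl ha⁻¹ * Coprod.inr (xgen ^ (-(k : ℤ))) *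
        Coprod.inl ha⁻¹ with hudef
      have humem : u ∈ φ.ker := by
        have hrw : u = v ^ R * ((Coprod.inl ha * Coprod.inr (xgen ^ (k : ℤ)) * Coprod.inl ha) *
            v * (Coprod.inl ha * Coprod.inr (xgen ^ (k : ℤ)) * Coprod.inl ha)⁻¹) := by
          rw [hudef, show ((-(k : ℤ)) : ℤ) = -(k : ℤ) from rfl, zpow_neg, map_inv, map_inv]
          group
        rw [hrw]
        exact mul_mem (pow_mem hvker _) (hnorm.conj_mem _ hvker _)
      refine finish u humem ?_
      rw [degree_coprodExpr_sred L hSL heq, hbL, hγd]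
      exact hnRk.symm
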